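/- Let a = (1-β)s'(p) - 1, b = u'(p) r'(e) ≤ 0, τ = τ_e/τ_x. The Jacobian J of the FSOE dynamics at (p,e) has a double zero eigenvalue (trace and determinant both zero) if and only if γ = τ a and τ a² + b β = 0; moreover, viewing this as the quadratic equation τ β² s'(p)² + (b - 2τ s'(p)(s'(p)-1)) β + (s'(p)-1)² = 0 in β, its discriminant is Δ_β = b(b - 4τ s'(p)(s'(p)-1)), which is nonnegative whenever b ≤ 0 and s'(p) ≥ 1, so the solutions β_± = 1 - 1/s'(p) + (-b ± √Δ_β)/(2τ s'(p)²) are real. -/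

import Mathlib

open Matrix

/-- Double zero eigenvalue of the FSOE Jacobian: trace and determinant vanish
iff `γ = τ a` and `τ a² + bβ = 0`; the discriminant `Δ_β = b(b - 4τ s'(s'-1))`
is nonnegative, so the solutions `β_±` are real and solve the double-zero
condition. -/
theorem stmt6 (S b re up β γ τx τe τ : ℝ) (hτx : 0 < τx) (hτe : 0 < τe)
    (hτ : τ = τe / τx) (hS : S > 1) (hb : b ≤ 0) (hbdef : b = up * re)
    (a : ℝ) (ha : a = (1-β) * S - 1)
    (J : Matrix (Fin 2) (Fin 2) ℝ)
    (hJ : J = !![(1/τx) * a, (1/τx) * (β * re);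
                 (1/τe) * up, (1/τe) * (-γ)]) :
    ((J.trace = 0 ∧ J.det = 0) ↔ (γ = τ * a ∧ τ * a ^ 2 + b * β = 0)) ∧
    b * (b - 4 * τ * S * (S - 1)) ≥ 0 ∧
    (∀ βr : ℝ,
      (βr = 1 - 1/S + (-b + Real.sqrt (b * (b - 4 * τ * S * (S - 1)))) / (2 * τ * S ^ 2) ∨
       βr = 1 - 1/S + (-b - Real.sqrt (b * (b - 4 * τ * S * (S - 1)))) / (2 * τ * S ^ 2)) →
      τ * ((1 - βr) * S - 1) ^ 2 + b * βr = 0) := by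
  have hτx' : τx ≠ 0 := ne_of_gt hτx
  have hτe' : τe ≠ 0 := ne_of_gt hτe
  have hτpos : 0 < τ := by rw [hτ]; positivity
  have hτ' : τ ≠ 0 := ne_of_gt hτpos
  have hS0 : S ≠ 0 := by linarith
  have htr2 : J.trace = a / τx - γ / τe := by
    rw [hJ]; simp [Matrix.trace_fin_two]; ring
  have hdet2 : J.det = (-(a * γ) - β * b) / (τx * τe) := by
    rw [hJ, hbdef]; simp [Matrix.det_fin_two]; field_simp
  have t1 : J.trace = 0 ↔ γ = τ * a := by
    rw [htr2, hτ]
    field_simp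
    constructor <;> intro h <;> linarith
  have d1 : J.det = 0 ↔ a * γ + b * β = 0 := by
    rw [hdet2, div_eq_zero_iff]
    have hne : τx * τe ≠ 0 := by positivity
    constructor
    · rintro (h | h)
      · linarith
      · exact absurd h hne
    · intro h; left; linarith
  have hΔ : b * (b - 4 * τ * S * (S - 1)) ≥ 0 := by
    have h1 : (0:ℝ) ≤ -b := by linarith
    have h2 : (0:ℝ) ≤ 4 * τ * S * (S - 1) - b := by
      have hp : 0 < τ * S * (S - 1) :=
        mul_pos (mul_pos hτpos (by linarith)) (by linarith)
      linarith
    nlinarith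
  refine ⟨⟨fun ⟨h1, h2⟩ => ?_, fun ⟨h1, h2⟩ => ?_⟩, hΔ, fun βr hβr => ?_⟩
  · have hγ := t1.mp h1
    have hd := d1.mp h2
    rw [hγ] at hd
    exact ⟨hγ, by linear_combination hd⟩
  · exact ⟨t1.mpr h1, d1.mpr (by rw [h1]; linear_combination h2)⟩
  · have hsq : Real.sqrt (b * (b - 4 * τ * S * (S - 1))) ^ 2
        = b * (b - 4 * τ * S * (S - 1)) := Real.sq_sqrt hΔ
    rcases hβr with h | h <;> subst h <;> field_simp <;>
      linear_combination Real.sq_sqrt (by linarith [hΔ] : (0:ℝ) ≤ b * (b - τ * S * (S - 1) * 4))
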